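/- Let X = [x̲, x̄] ⊆ ℝⁿ be a closed hyperrectangle and let f : ℝⁿ → ℝᵐ be differentiable with sign-stable partial derivatives on X, i.e., for each pair (i,j), either ∂f_i/∂x_j(x) ≥ 0 for all x ∈ X, or ∂f_i/∂x_j(x) ≤ 0 for all x ∈ X. Define g : ℝⁿ × ℝⁿ → ℝᵐ by g_i(x,y) = f_i(z), where z_j = x_j if ∂f_i/∂x_j ≥ 0 on X and z_j = y_j if ∂f_i/∂x_j ≤ 0 on X. Then g is a decomposition function of f on X, and hence f is mixed monotone on X with respect to the componentwise orders. -/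

import Mathlib

open Set


private lemma curve_hasDerivAt {n m : ℕ} {f : (Fin n → ℝ) → Fin m → ℝ}
    (hf : Differentiable ℝ f) (i : Fin m) (a b : Fin n → ℝ) (t : ℝ) :
    HasDerivAt (fun t : ℝ => f (a + t • (b - a)) i)
      (fderiv ℝ f (a + t • (b - a)) (b - a) i) t := by
  have h1 : HasDerivAt (fun t : ℝ => a + t • (b - a)) (b - a) t := by
    simpa using ((hasDerivAt_id t).smul_const (b - a)).const_add a
  have h2 := (hf (a + t • (b - a))).hasFDerivAt.comp_hasDerivAt t h1
  exact (ContinuousLinearMap.proj (R := ℝ) (φ := fun _ : Fin m => ℝ) i).hasFDerivAt.comp_hasDerivAt t h2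

private lemma fderiv_apply_eq_sum {n m : ℕ} (f : (Fin n → ℝ) → Fin m → ℝ)
    (p v : Fin n → ℝ) (i : Fin m) :
    fderiv ℝ f p v i = ∑ j, v j * fderiv ℝ f p (Pi.single j 1) i := by
  have hv : v = ∑ j, v j • (Pi.single j 1 : Fin n → ℝ) := by
    conv_lhs => rw [pi_eq_sum_univ v]
    refine Finset.sum_congr rfl fun j _ => ?_
    funext k
    simp [Pi.single_apply, eq_comm]
  conv_lhs => rw [hv]
  rw [map_sum]
  simp [Finset.sum_apply, smul_eq_mul]

private lemma key_mono {n m : ℕ} {xlo xhi : Fin n → ℝ} {f : (Fin n → ℝ) → Fin m → ℝ}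
    (hf : Differentiable ℝ f) (i : Fin m) {a b : Fin n → ℝ}
    (ha : a ∈ Icc xlo xhi) (hb : b ∈ Icc xlo xhi) (hab : a ≤ b)
    (hd : ∀ j, a j ≠ b j → ∀ x ∈ Icc xlo xhi, 0 ≤ fderiv ℝ f x (Pi.single j 1) i) :
    f a i ≤ f b i := by
  set φ : ℝ → ℝ := fun t => f (a + t • (b - a)) i with hφ
  have hdiff : ∀ t : ℝ, HasDerivAt φ (fderiv ℝ f (a + t • (b - a)) (b - a) i) t :=
    fun t => curve_hasDerivAt hf i a b t
  have hmem : ∀ t ∈ Icc (0:ℝ) 1, a + t • (b - a) ∈ Icc xlo xhi := fun t ht =>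
    (convex_Icc xlo xhi).add_smul_sub_mem ha hb ht
  have hmono : MonotoneOn φ (Icc (0:ℝ) 1) := by
    refine monotoneOn_of_deriv_nonneg (convex_Icc 0 1)
      (fun t _ => (hdiff t).continuousAt.continuousWithinAt)
      (fun t _ => (hdiff t).differentiableAt.differentiableWithinAt) ?_
    intro t ht
    rw [(hdiff t).deriv, fderiv_apply_eq_sum]
    refine Finset.sum_nonneg fun j _ => ?_
    by_cases hj : a j = b j
    · simp [hj]
    · refine mul_nonneg (by simpa using sub_nonneg.2 (hab j)) ?_
      exact hd j hj _ (hmem t (interior_subset ht))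
  have h0 : φ 0 = f a i := by simp [hφ]
  have h1 : φ 1 = f b i := by simp [hφ]
  rw [← h0, ← h1]
  exact hmono (by norm_num) (by norm_num) zero_le_one

private lemma key_anti {n m : ℕ} {xlo xhi : Fin n → ℝ} {f : (Fin n → ℝ) → Fin m → ℝ}
    (hf : Differentiable ℝ f) (i : Fin m) {a b : Fin n → ℝ}
    (ha : a ∈ Icc xlo xhi) (hb : b ∈ Icc xlo xhi) (hab : a ≤ b)
    (hd : ∀ j, a j ≠ b j → ∀ x ∈ Icc xlo xhi, fderiv ℝ f x (Pi.single j 1) i ≤ 0) :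
    f b i ≤ f a i := by
  have h := key_mono (f := fun x => -f x) hf.neg i ha hb hab ?_
  · simpa using h
  · intro j hj x hx
    rw [fderiv_fun_neg]
    simpa using hd j hj x hx

private lemma ite_mem_Icc {n : ℕ} {xlo xhi x y : Fin n → ℝ} (c : Fin n → Bool)
    (hx : x ∈ Icc xlo xhi) (hy : y ∈ Icc xlo xhi) :
    (fun j => if c j then x j else y j) ∈ Icc xlo xhi := by
  constructor <;> intro j <;> by_cases h : c j <;>
    simp [h, hx.1 j, hx.2 j, hy.1 j, hy.2 j]



/-- `g` is a decomposition function of `f` on `X` (componentwise orders). -/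
def DecompOn {n m : ℕ} (f : (Fin n → ℝ) → Fin m → ℝ)
    (g : (Fin n → ℝ) → (Fin n → ℝ) → Fin m → ℝ) (X : Set (Fin n → ℝ)) : Prop :=
  (∀ x ∈ X, g x x = f x) ∧
  (∀ x₁ ∈ X, ∀ x₂ ∈ X, ∀ y ∈ X, x₁ ≤ x₂ → g x₁ y ≤ g x₂ y) ∧
  (∀ x ∈ X, ∀ y₁ ∈ X, ∀ y₂ ∈ X, y₁ ≤ y₂ → g x y₂ ≤ g x y₁)

/-- a differentiable function with sign-stable partial derivatives on the
hyperrectangle `X = [x̲, x̄]` is mixed monotone on `X`, with decomposition function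
`gᵢ(x,y) = fᵢ(z)` where `zⱼ = xⱼ` if `∂fᵢ/∂xⱼ ≥ 0` on `X` and `zⱼ = yⱼ` if `∂fᵢ/∂xⱼ ≤ 0`
on `X`. The Boolean `s i j` records the sign choice for the pair `(i,j)`. -/
theorem mixed_monotone_of_sign_stable_partials {n m : ℕ} (xlo xhi : Fin n → ℝ)
    (f : (Fin n → ℝ) → Fin m → ℝ) (hf : Differentiable ℝ f)
    (s : Fin m → Fin n → Bool)
    (hsign : ∀ i j,
      (s i j = true → ∀ x ∈ Set.Icc xlo xhi, 0 ≤ fderiv ℝ f x (Pi.single j 1) i) ∧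
      (s i j = false → ∀ x ∈ Set.Icc xlo xhi, fderiv ℝ f x (Pi.single j 1) i ≤ 0)) :
    DecompOn f (fun x y i => f (fun j => if s i j then x j else y j) i) (Set.Icc xlo xhi) ∧
    ∃ g, DecompOn f g (Set.Icc xlo xhi) := by

  have hdec : DecompOn f (fun x y i => f (fun j => if s i j then x j else y j) i)
      (Set.Icc xlo xhi) := by
    refine ⟨?_, ?_, ?_⟩
    · intro x _
      funext i
      simp only [ite_self]
    · intro x₁ hx₁ x₂ hx₂ y hy hle i
      refine key_mono hf i (ite_mem_Icc (s i) hx₁ hy) (ite_mem_Icc (s i) hx₂ hy) ?_ ?_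
      · intro j
        by_cases h : s i j <;> simp [h, hle j]
      · intro j hj x hx
        by_cases h : s i j
        · exact (hsign i j).1 h x hx
        · simp [h] at hj
    · intro x hx y₁ hy₁ y₂ hy₂ hle i
      refine key_anti hf i (ite_mem_Icc (s i) hx hy₁) (ite_mem_Icc (s i) hx hy₂) ?_ ?_
      · intro j
        by_cases h : s i j <;> simp [h, hle j]
      · intro j hj x' hx'
        by_cases h : s i j
        · simp [h] at hj
        · exact (hsign i j).2 (by simp [h]) x' hx'
  exact ⟨hdec, _, hdec⟩
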